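/- Let P• be the F_q-algebra endomorphism of F_q[x_1,...,x_{2m}] with P•(x_i) = x_i - x_i^q. For s ≥ 2 and j ∈ {-1,1}, with Ω_{s,j} = Σ_{i=1}^m (x_{2m-i+1}^{q^s} x_i + j x_{2m-i+1} x_i^{q^s}), one has P•(Ω_{s,j}) = Ω_{s,j}^q - Ω_{s+1,j} - Ω_{s-1,j}^q + Ω_{s,j}. -/

import Mathlib

open MvPolynomial Finset

/-- The `i`-th Steenrod operation `P^i` on `F[x_1,…,x_n]`: the coefficient of `ζ^i` in the image
of `f` under the `F`-algebra map sending each variable `x_k` to `x_k + x_k^q ζ`. -/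
noncomputable def steenrod (F : Type*) [Field F] [Fintype F] (n i : ℕ)
    (f : MvPolynomial (Fin n) F) : MvPolynomial (Fin n) F :=
  ((MvPolynomial.aeval fun k : Fin n =>
      (Polynomial.C (MvPolynomial.X k) +
        Polynomial.X * Polynomial.C (MvPolynomial.X k ^ Fintype.card F) :
        Polynomial (MvPolynomial (Fin n) F))) f).coeff i

/-- `Ω_{0,1} = Σ_{i=1}^m x_{2m-i+1} x_i`. -/
noncomputable def Omega0 (F : Type*) [Field F] [Fintype F] (m : ℕ) :
    MvPolynomial (Fin (2 * m)) F :=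
  ∑ i : Fin m,
    MvPolynomial.X (⟨2 * m - 1 - i, by have := i.isLt; omega⟩ : Fin (2 * m)) *
      MvPolynomial.X (⟨i, by have := i.isLt; omega⟩ : Fin (2 * m))

/-- `Ω_{s,j} = Σ_{i=1}^m (x_{2m-i+1}^{q^s} x_i + j · x_{2m-i+1} x_i^{q^s})` for `s ≥ 1`. -/
noncomputable def Omega (F : Type*) [Field F] [Fintype F] (m s : ℕ) (j : F) :
    MvPolynomial (Fin (2 * m)) F :=
  ∑ i : Fin m,
    (MvPolynomial.X (⟨2 * m - 1 - i, by have := i.isLt; omega⟩ : Fin (2 * m)) ^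
        (Fintype.card F ^ s) *
      MvPolynomial.X (⟨i, by have := i.isLt; omega⟩ : Fin (2 * m)) +
     j • (MvPolynomial.X (⟨2 * m - 1 - i, by have := i.isLt; omega⟩ : Fin (2 * m)) *
      MvPolynomial.X (⟨i, by have := i.isLt; omega⟩ : Fin (2 * m)) ^ (Fintype.card F ^ s)))

theorem stmt_15 (F : Type*) [Field F] [Fintype F] (m : ℕ) (j : F) (hj : j = 1 ∨ j = -1)
    (s : ℕ) (hs : 2 ≤ s) :
    MvPolynomial.aeval (R := F)
        (fun i : Fin (2 * m) => MvPolynomial.X i - MvPolynomial.X i ^ Fintype.card F)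
        (Omega F m s j)
      = (Omega F m s j) ^ Fintype.card F - Omega F m (s + 1) j
        - (Omega F m (s - 1) j) ^ Fintype.card F + Omega F m s j := by
  haveI hp : Fact (ringChar F).Prime := ⟨CharP.char_is_prime F _⟩
  obtain ⟨k, -, hcard⟩ := FiniteField.card F (ringChar F)
  set p := ringChar F with hpdef
  set q := Fintype.card F with hq
  haveI : CharP (MvPolynomial (Fin (2 * m)) F) p := inferInstance
  have hsub : ∀ (a b : MvPolynomial (Fin (2 * m)) F) (t : ℕ),
      (a - b) ^ q ^ t = a ^ q ^ t - b ^ q ^ t := by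
    intro a b t
    rw [hcard, ← pow_mul, sub_pow_char_pow]
  have hsum : ∀ (f : Fin m → MvPolynomial (Fin (2 * m)) F),
      (∑ i, f i) ^ q = ∑ i, f i ^ q := by
    intro f
    rw [hcard, sum_pow_char_pow]
  have hadd : ∀ (a b : MvPolynomial (Fin (2 * m)) F),
      (a + b) ^ q = a ^ q + b ^ q := by
    intro a b
    rw [hcard, add_pow_char_pow]
  have hjq : j ^ q = j := FiniteField.pow_card j
  have hCj : (MvPolynomial.C j : MvPolynomial (Fin (2 * m)) F) ^ q = MvPolynomial.C j := by
    rw [← map_pow, hjq]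
  obtain ⟨t, rfl⟩ : ∃ t, s = t + 2 := ⟨s - 2, by omega⟩
  have hs1 : t + 2 - 1 = t + 1 := rfl
  unfold Omega
  rw [map_sum, hsum, hsum, hs1,
    ← Finset.sum_sub_distrib, ← Finset.sum_sub_distrib, ← Finset.sum_add_distrib]
  refine Finset.sum_congr rfl fun i _ => ?_
  simp only [map_add, map_mul, map_pow, MvPolynomial.aeval_X, map_smul, hadd, mul_pow,
    smul_pow, hjq, hsub, smul_eq_C_mul, MvPolynomial.aeval_C, MvPolynomial.algebraMap_eq, hCj, ← hq]
  ring
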